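/- As formal power series in q, Σ_{k=-∞}^∞ (-q)^{k^2} = ∏_{j=1}^∞ (1-q^j)/(1+q^j). -/

import Mathlib

open Finset PowerSeries

/-- The formal variable as a power series over ℚ. -/
noncomputable def Q : PowerSeries ℚ := PowerSeries.X

/-- psSum f is the formal power series sum_{k=1}^∞ f k; since in all uses below the
k-th term has order at least k, the coefficient of q^n is sum_{k=1}^n coeff n (f k). -/
noncomputable def psSum (f : ℕ → PowerSeries ℚ) : PowerSeries ℚ :=
  PowerSeries.mk fun n => ∑ k ∈ Finset.Icc 1 n, PowerSeries.coeff n (f k)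

/-- psProd f is the formal power series prod_{j=1}^∞ f j; since in all uses below
f j = 1 + O(q^j), the coefficient of q^n is that of prod_{j=1}^n f j. -/
noncomputable def psProd (f : ℕ → PowerSeries ℚ) : PowerSeries ℚ :=
  PowerSeries.mk fun n => PowerSeries.coeff n (∏ j ∈ Finset.Icc 1 n, f j)


noncomputable section
namespace GaussAux

abbrev R := PowerSeries ℚ

/-- (q²;q²)_m -/
def EE (m : ℕ) : R := ∏ i ∈ Finset.range m, (1 - X ^ (2*i+2))
/-- (q;q²)_m -/
def OO (m : ℕ) : R := ∏ i ∈ Finset.range m, (1 - X ^ (2*i+1))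

/-- Gaussian binomial [m choose k]_{q²}, defined by the Pascal recurrence. -/
def gg : ℕ → ℕ → R
  | _, 0 => 1
  | 0, _+1 => 0
  | m+1, k+1 => gg m (k+1) + X ^ (2*(m-k)) * gg m k

lemma constCoeff_EE (m : ℕ) : constantCoeff (EE m) = 1 := by
  simp [EE, map_prod]

lemma EE_mul_inv (m : ℕ) : EE m * (EE m)⁻¹ = 1 :=
  PowerSeries.mul_inv_cancel _ (by simp [constCoeff_EE])

lemma EE_succ (m : ℕ) : EE (m+1) = EE m * (1 - X ^ (2*m+2)) := by
  simp [EE, Finset.prod_range_succ]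

lemma isUnit_EE (m : ℕ) : IsUnit (EE m) :=
  IsUnit.of_mul_eq_one _ (EE_mul_inv m)

lemma OO_succ (m : ℕ) : OO (m+1) = OO m * (1 - X ^ (2*m+1)) := by
  simp [OO, Finset.prod_range_succ]

lemma gg_zero (m : ℕ) : gg m 0 = 1 := by cases m <;> rfl

lemma gg_succ_succ (m k : ℕ) :
    gg (m+1) (k+1) = gg m (k+1) + X ^ (2*(m-k)) * gg m k := rfl

lemma gg_of_lt : ∀ {m k : ℕ}, m < k → gg m k = 0
  | 0, _+1, _ => rfl
  | m+1, k+1, h => by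
      have h1 : m < k + 1 := by omega
      have h2 : m < k := by omega
      rw [gg_succ_succ, gg_of_lt h1, gg_of_lt h2, mul_zero, add_zero]

/-- The key product formula for the recursively defined Gaussian binomials. -/
lemma gg_mul : ∀ m k : ℕ, k ≤ m → gg m k * (EE k * EE (m-k)) = EE m
  | m, 0, _ => by simp [gg_zero, EE]
  | 0, k+1, h => by omega
  | m+1, k+1, h => by
      rw [gg_succ_succ]
      rcases Nat.lt_or_ge k m with hk | hk
      · -- k+1 ≤ m
        have hkm : k + 1 ≤ m := hk
        have hm : m + 1 - (k+1) = m - k := by omega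
        have e1 : EE (m-k) = EE (m-(k+1)) * (1 - X ^ (2*(m-k))) := by
          have h1 : m-k = (m-(k+1)) + 1 := by omega
          rw [h1, EE_succ]; congr 3
        have e2 : EE (k+1) = EE k * (1 - X ^ (2*k+2)) := EE_succ k
        have hPQ : (X:R) ^ (2*(m-k)) * X ^ (2*k+2) = X ^ (2*m+2) := by
          rw [← pow_add]; congr 1; omega
        have ih1 := gg_mul m (k+1) hkm
        have ih2 := gg_mul m k (le_of_lt hk)
        rw [e2] at ih1
        rw [e1] at ih2
        rw [hm, EE_succ m, e1, e2]
        linear_combination (1 - (X:R)^(2*(m-k))) * ih1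
          + (X:R)^(2*(m-k)) * (1 - X^(2*k+2)) * ih2 - EE m * hPQ
      · -- k+1 = m+1
        have : k = m := by omega
        subst this
        rw [gg_of_lt (Nat.lt_succ_self k), zero_add, Nat.sub_self,
          Nat.mul_zero, pow_zero, one_mul, Nat.succ_sub_succ, Nat.sub_self]
        have h0 : EE 0 = 1 := by simp [EE]
        have hkk : gg k k * EE k = EE k := by
          have := gg_mul k k le_rfl
          rwa [Nat.sub_self, h0, mul_one] at this
        rw [h0, mul_one, EE_succ, ← mul_assoc, hkk]


lemma sq_expand (k : ℕ) : (k+1)*k = k*(k-1)+2*k := by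
  cases k with
  | zero => simp
  | succ s => simp [Nat.succ_sub_one]; ring

/-- The q-binomial theorem (base q²). -/
theorem qbinom (m : ℕ) (x y : R) :
    ∏ i ∈ range m, (x + y * X ^ (2*i)) =
      ∑ k ∈ range (m+1), gg m k * X ^ (k*(k-1)) * y^k * x^(m-k) := by
  induction m with
  | zero => simp [gg_zero]
  | succ m ih =>
    have hsplit : ∀ k ∈ range (m+1),
        gg (m+1) (k+1) * X^((k+1)*((k+1)-1)) * y^(k+1) * x^(m+1-(k+1))
          = gg m (k+1) * X^((k+1)*k) * y^(k+1) * x^(m-k)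
            + gg m k * X^(k*(k-1)) * y^k * x^(m-k) * (y * X^(2*m)) := by
      intro k hk
      have hkm : k ≤ m := by simpa [Nat.lt_succ_iff] using hk
      have hexp : 2*(m-k)+(k+1)*k = k*(k-1)+2*m := by
        have := sq_expand k; omega
      have hX : (X:R)^(2*(m-k)) * X^((k+1)*k) = X^(k*(k-1)) * X^(2*m) := by
        rw [← pow_add, ← pow_add, hexp]
      have hs : m + 1 - (k+1) = m - k := by omega
      have hs2 : (k+1) - 1 = k := by omega
      rw [hs, hs2, gg_succ_succ, add_mul, add_mul, add_mul]
      congr 1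
      linear_combination gg m k * y^k * y * x^(m-k) * hX
    have main : ∑ k ∈ range (m+1+1), gg (m+1) k * X^(k*(k-1)) * y^k * x^(m+1-k)
        = (∑ k ∈ range (m+1), gg m k * X ^ (k*(k-1)) * y^k * x^(m-k)) * (x + y * X^(2*m)) := by
      rw [Finset.sum_range_succ', Finset.sum_congr rfl hsplit, Finset.sum_add_distrib]
      rw [mul_add, Finset.sum_mul, Finset.sum_mul]
      have e1 : ∑ k ∈ range (m+1), gg m k * X ^ (k*(k-1)) * y^k * x^(m-k) * x
          = (∑ k ∈ range (m+1), gg m (k+1) * X^((k+1)*k) * y^(k+1) * x^(m-k))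
            + gg (m+1) 0 * X^(0*(0-1)) * y^0 * x^(m+1-0) := by
        rw [Finset.sum_range_succ' (fun k => gg m k * X ^ (k*(k-1)) * y^k * x^(m-k) * x)]
        congr 1
        · rw [Finset.sum_range_succ, gg_of_lt (Nat.lt_succ_self m)]
          simp only [zero_mul, add_zero]
          refine Finset.sum_congr rfl fun k hk => ?_
          have hkm : k < m := by simpa using hk
          have hs2 : (k+1) - 1 = k := by omega
          have hxx : x^(m-(k+1)) * x = x^(m-k) := by
            rw [← pow_succ]; congr 1; omega
          rw [hs2]
          linear_combination gg m (k+1) * X^((k+1)*k) * y^(k+1) * hxx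
        · simp [gg_zero, pow_succ]
      rw [e1]
      ring
    rw [Finset.prod_range_succ, ih, ← main]

/-- squared distance |n-k|² in ℕ. -/
def dsq (n k : ℕ) : ℕ := (n-k)^2 + (k-n)^2

lemma np (n k : ℕ) (h : k ≤ 2*n) : ((-1:R))^(2*n-k) = (-1)^k := by
  calc ((-1:R))^(2*n-k) = (-1)^(2*n-k) * ((-1)^2)^k := by norm_num
    _ = (-1)^(2*n-k+2*k) := by rw [← pow_mul, ← pow_add]
    _ = (-1)^(2*n+k) := by congr 1; omega
    _ = ((-1)^2)^n * (-1)^k := by rw [← pow_mul, ← pow_add]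
    _ = (-1)^k := by norm_num

lemma expo (n k : ℕ) (h : k ≤ 2*n) :
    k*(k-1) + (2*n-1)*(2*n-k) = 3*n^2-2*n + dsq n k := by
  have h3 : 2*n ≤ 3*n^2 := by nlinarith
  rcases Nat.eq_zero_or_pos k with rfl|hk
  · rcases Nat.eq_zero_or_pos n with rfl|hn
    · simp [dsq]
    · have h1 : (1:ℕ) ≤ 2*n := by omega
      simp only [dsq, Nat.sub_zero, Nat.zero_sub, Nat.mul_zero, Nat.zero_mul, zero_add]
      zify [h1, h3]
      ring
  · have hn : 1 ≤ n ∨ n = 0 := by omega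
    have h1 : (1:ℕ) ≤ 2*n := by
      rcases Nat.eq_zero_or_pos n with rfl|hn; · omega
      omega
    rcases le_total k n with h2|h2
    · have hkn : k - n = 0 := by omega
      simp only [dsq, hkn]
      zify [h1, h2, h3, hk, h]
      ring
    · have hnk : n - k = 0 := by omega
      simp only [dsq, hnk]
      zify [h1, h2, h3, hk, h]
      ring

/-- Pairing: the specialized product is a perfect square times a monomial. -/
lemma prodpair (n : ℕ) :
    ∏ i ∈ range (2*n), ((X:R)^(2*i) - X^(2*n-1))
      = (-1)^n * X^(3*n^2-2*n) * (OO n)^2 := by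
  have h2 : range (2*n) = range (n+n) := by rw [two_mul]
  rw [h2, Finset.prod_range_add]
  rw [← Finset.prod_range_reflect (fun i => (X:R)^(2*(n+i)) - X^(2*n-1)) n]
  rw [← Finset.prod_mul_distrib]
  have hpt : ∀ i ∈ range n,
      ((X:R)^(2*i) - X^(2*n-1)) * ((X:R)^(2*(n+(n-1-i))) - X^(2*n-1))
        = (-1) * X^(2*i+(2*n-1)) * ((1 - X^(2*(n-1-i)+1))^2) := by
    intro i hi
    have hin : i < n := by simpa using hi
    set e := 2*(n-1-i)+1 with he
    have h1 : 2*n-1 = 2*i + e := by omega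
    have h2' : 2*(n+(n-1-i)) = 2*i + 2*e := by omega
    rw [h1, h2']
    simp only [pow_add, pow_mul]
    ring
  rw [Finset.prod_congr rfl hpt]
  rw [Finset.prod_mul_distrib, Finset.prod_mul_distrib]
  have hO : ∏ i ∈ range n, (1 - (X:R)^(2*(n-1-i)+1))^2 = (OO n)^2 := by
    rw [Finset.prod_pow]
    congr 1
    exact Finset.prod_range_reflect (fun i => 1 - (X:R)^(2*i+1)) n
  have hX : ∏ i ∈ range n, (X:R)^(2*i+(2*n-1)) = X^(3*n^2-2*n) := by
    rw [Finset.prod_pow_eq_pow_sum]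
    congr 1
    have g := Finset.sum_range_id_mul_two n
    have : ∑ i ∈ range n, (2*i+(2*n-1)) = (∑ i ∈ range n, i)*2 + n*(2*n-1) := by
      rw [Finset.sum_add_distrib, Finset.sum_const, Finset.card_range, Finset.sum_mul,
        smul_eq_mul]
      congr 1
      exact Finset.sum_congr rfl fun i _ => by ring
    rw [this, g]
    rcases Nat.eq_zero_or_pos n with rfl|hn
    · simp
    · have h3 : 2*n ≤ 3*n^2 := by nlinarith
      zify [hn, h3, show (1:ℕ) ≤ 2*n by omega]
      ring
  rw [hO, hX]
  simp

/-- The finite Gauss identity: (q;q²)_n² as a bilateral signed sum of Gaussian binomials. -/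
lemma star (n : ℕ) :
    (OO n)^2 = ∑ k ∈ range (2*n+1), (-1)^(n+k) * gg (2*n) k * X^(dsq n k) := by
  have q := qbinom (2*n) (-X^(2*n-1)) 1
  have hL : ∏ i ∈ range (2*n), (-(X:R)^(2*n-1) + 1 * X^(2*i))
      = ∏ i ∈ range (2*n), ((X:R)^(2*i) - X^(2*n-1)) :=
    Finset.prod_congr rfl fun i _ => by ring
  have hR : ∑ k ∈ range (2*n+1), gg (2*n) k * X^(k*(k-1)) * (1:R)^k * (-X^(2*n-1))^(2*n-k)
      = ∑ k ∈ range (2*n+1), (-1)^k * gg (2*n) k * (X^(3*n^2-2*n) * X^(dsq n k)) := by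
    refine Finset.sum_congr rfl fun k hk => ?_
    have hk2 : k ≤ 2*n := by simpa [Nat.lt_succ_iff] using hk
    rw [one_pow, mul_one, neg_pow, np n k hk2, ← pow_mul]
    have hXp : (X:R)^(k*(k-1)) * X^((2*n-1)*(2*n-k)) = X^(3*n^2-2*n) * X^(dsq n k) := by
      rw [← pow_add, ← pow_add, expo n k hk2]
    linear_combination ((-1:R)^k * gg (2*n) k) * hXp
  rw [hL, hR, prodpair] at q
  have hpull : ∑ k ∈ range (2*n+1), (-1:R)^k * gg (2*n) k * (X^(3*n^2-2*n) * X^(dsq n k))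
      = X^(3*n^2-2*n) * ∑ k ∈ range (2*n+1), (-1)^k * gg (2*n) k * X^(dsq n k) := by
    rw [Finset.mul_sum]; exact Finset.sum_congr rfl fun k _ => by ring
  rw [hpull] at q
  have hxne : (X:R)^(3*n^2-2*n) ≠ 0 := pow_ne_zero _ PowerSeries.X_ne_zero
  have q2 : (-1:R)^n * (OO n)^2
      = ∑ k ∈ range (2*n+1), (-1)^k * gg (2*n) k * X^(dsq n k) := by
    apply mul_left_cancel₀ hxne
    rw [← q]; ring
  have hnn : (-1:R)^n * (-1)^n = 1 := by
    rw [← pow_add]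
    exact Even.neg_one_pow ⟨n, rfl⟩
  calc (OO n)^2 = (-1:R)^n * ((-1)^n * (OO n)^2) := by
        rw [← mul_assoc, hnn, one_mul]
    _ = (-1:R)^n * ∑ k ∈ range (2*n+1), (-1)^k * gg (2*n) k * X^(dsq n k) := by rw [q2]
    _ = ∑ k ∈ range (2*n+1), (-1)^(n+k) * gg (2*n) k * X^(dsq n k) := by
        rw [Finset.mul_sum]
        refine Finset.sum_congr rfl fun k _ => by rw [pow_add]; ring

/-! ### Congruence modulo X^c -/

def D (c : ℕ) (A B : R) : Prop := (X:R)^c ∣ A - B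

lemma D.refl (c : ℕ) (A : R) : D c A A := by simp [D]

lemma D.symm {c : ℕ} {A B : R} (h : D c A B) : D c B A := by
  have : B - A = -(A - B) := by ring
  rw [D, this]
  exact h.neg_right

lemma D.trans {c : ℕ} {A B C : R} (h1 : D c A B) (h2 : D c B C) : D c A C := by
  have : A - C = (A - B) + (B - C) := by ring
  rw [D, this]
  exact dvd_add h1 h2

lemma D.mul {c : ℕ} {A B A' B' : R} (h : D c A B) (h' : D c A' B') :
    D c (A * A') (B * B') := by
  have : A * A' - B * B' = A * (A' - B') + (A - B) * B' := by ring
  rw [D, this]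
  exact dvd_add (Dvd.dvd.mul_left h' A) (Dvd.dvd.mul_right h B')

lemma D.add {c : ℕ} {A B A' B' : R} (h : D c A B) (h' : D c A' B') :
    D c (A + A') (B + B') := by
  have : A + A' - (B + B') = (A - B) + (A' - B') := by ring
  rw [D, this]
  exact dvd_add h h'

lemma D.sum {c : ℕ} {s : Finset ℕ} {f g : ℕ → R} (h : ∀ i ∈ s, D c (f i) (g i)) :
    D c (∑ i ∈ s, f i) (∑ i ∈ s, g i) := by
  rw [D, ← Finset.sum_sub_distrib]
  exact Finset.dvd_sum h

lemma D.inv {c : ℕ} {A B Ai Bi : R} (h : D c A B) (hA : A * Ai = 1) (hB : B * Bi = 1) :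
    D c Ai Bi := by
  have key : Ai - Bi = Ai * Bi * (B - A) := by
    have : Ai * Bi * (B - A) = Ai * (B * Bi) - (A * Ai) * Bi := by ring
    rw [this, hA, hB]
    ring
  rw [D, key]
  exact Dvd.dvd.mul_left h.symm _

lemma D.mono {c c' : ℕ} {A B : R} (h : c ≤ c') (hd : D c' A B) : D c A B :=
  dvd_trans (pow_dvd_pow X h) hd

lemma D.of_mul_unit {c : ℕ} {A B u v : R} (huv : u * v = 1)
    (h : D c (A * u) (B * u)) : D c A B := by
  have key : A - B = (A * u - B * u) * v := by
    have : (A * u - B * u) * v = A * (u*v) - B * (u*v) := by ring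
    rw [this, huv]
    ring
  rw [D, key]
  exact Dvd.dvd.mul_right h v

lemma D_EE {N b : ℕ} (hb : N + 1 ≤ 2*b+2) : ∀ {a : ℕ}, b ≤ a → D (N+1) (EE a) (EE b) := by
  intro a hba
  induction a, hba using Nat.le_induction with
  | base => exact D.refl _ _
  | succ a hba ih =>
    rw [EE_succ]
    have key : EE a * (1 - X^(2*a+2)) - EE b = (EE a - EE b) - EE a * X^(2*a+2) := by ring
    rw [D, key]
    exact dvd_sub ih (Dvd.dvd.mul_left (pow_dvd_pow X (by omega)) _)

lemma gg_eq (m k : ℕ) (h : k ≤ m) : gg m k = EE m * (EE k)⁻¹ * (EE (m-k))⁻¹ := by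
  have h1 := gg_mul m k h
  have h2 : (EE k * EE (m-k)) * ((EE k)⁻¹ * (EE (m-k))⁻¹) = 1 := by
    rw [mul_mul_mul_comm, EE_mul_inv, EE_mul_inv, one_mul]
  calc gg m k = gg m k * ((EE k * EE (m-k)) * ((EE k)⁻¹ * (EE (m-k))⁻¹)) := by
        rw [h2, mul_one]
    _ = (gg m k * (EE k * EE (m-k))) * ((EE k)⁻¹ * (EE (m-k))⁻¹) := by ring
    _ = EE m * (EE k)⁻¹ * (EE (m-k))⁻¹ := by rw [h1, mul_assoc]

lemma sq_bound {d N : ℕ} (h : d^2 ≤ N) : 2*d ≤ N+1 := by nlinarith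

lemma D_gg {N k : ℕ} (hk : k ≤ 2*(N+1)) (hd : dsq (N+1) k ≤ N) :
    D (N+1) (gg (2*(N+1)) k) ((EE N)⁻¹) := by
  set n := N + 1 with hn
  have hbk : N + 1 ≤ 2*k+2 := by
    rcases le_total k n with h1 | h1
    · have hkn : k - n = 0 := by omega
      have : (n-k)^2 ≤ N := by
        have : dsq n k = (n-k)^2 := by simp [dsq, hkn]
        omega
      have := sq_bound this
      omega
    · omega
  have hbk2 : N + 1 ≤ 2*(2*n-k)+2 := by
    rcases le_total k n with h1 | h1
    · omega
    · have hnk : n - k = 0 := by omega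
      have : (k-n)^2 ≤ N := by
        have : dsq n k = (k-n)^2 := by simp [dsq, hnk]
        omega
      have := sq_bound this
      omega
  have e1 : D (N+1) (EE (2*n)) (EE N) := D_EE (by omega) (by omega)
  have e2 : D (N+1) (EE k) (EE N) := by
    rcases le_total N k with h1 | h1
    · exact D_EE (by omega) h1
    · exact (D_EE (by omega) h1).symm
  have e3 : D (N+1) (EE (2*n-k)) (EE N) := by
    rcases le_total N (2*n-k) with h1 | h1
    · exact D_EE (by omega) h1
    · exact (D_EE (by omega) h1).symm
  rw [gg_eq _ _ hk]
  have i2 : D (N+1) ((EE k)⁻¹) ((EE N)⁻¹) := e2.inv (EE_mul_inv k) (EE_mul_inv N)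
  have i3 : D (N+1) ((EE (2*n-k))⁻¹) ((EE N)⁻¹) := e3.inv (EE_mul_inv _) (EE_mul_inv N)
  have := (e1.mul i2).mul i3
  have heq : EE N * (EE N)⁻¹ * (EE N)⁻¹ = (EE N)⁻¹ := by rw [EE_mul_inv, one_mul]
  rwa [heq] at this

/-- The bilateral sum simplifies. -/
lemma Bsimp (n : ℕ) : (∑ k ∈ range (2*n+1), (-1:R)^(n+k) * X^(dsq n k))
    = 1 + 2 * ∑ j ∈ range n, (-1:R)^(j+1) * X^((j+1)^2) := by
  have hsplit : (2:ℕ)*n+1 = n + (n+1) := by omega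
  rw [hsplit, Finset.sum_range_add, Finset.sum_range_succ']
  have hmid : (-1:R)^(n+(n+0)) * X^(dsq n (n+0)) = 1 := by
    have : dsq n (n+0) = 0 := by simp [dsq]
    rw [this, pow_zero, mul_one]
    exact Even.neg_one_pow ⟨n, by omega⟩
  have hright : ∀ k ∈ range n, (-1:R)^(n+(n+(k+1))) * X^(dsq n (n+(k+1)))
      = (-1:R)^(k+1) * X^((k+1)^2) := by
    intro k hk
    have h1 : dsq n (n+(k+1)) = (k+1)^2 := by
      simp [dsq, Nat.sub_eq_zero_of_le (by omega : n ≤ n + (k+1)),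
        show n+(k+1)-n = k+1 by omega]
    have h2 : (-1:R)^(n+(n+(k+1))) = (-1)^(k+1) := by
      rw [show n+(n+(k+1)) = 2*n+(k+1) by omega, pow_add, pow_mul]
      norm_num
    rw [h1, h2]
  have hleft : ∑ k ∈ range n, (-1:R)^(n+k) * X^(dsq n k)
      = ∑ k ∈ range n, (-1:R)^(k+1) * X^((k+1)^2) := by
    rw [← Finset.sum_range_reflect]
    refine Finset.sum_congr rfl fun k hk => ?_
    have hkn : k < n := by simpa using hk
    have h1 : dsq n (n-1-k) = (k+1)^2 := by
      have : n - (n-1-k) = k+1 := by omega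
      have h0 : n-1-k ≤ n := by omega
      simp [dsq, this, Nat.sub_eq_zero_of_le h0]
    have h2 : (-1:R)^(n+(n-1-k)) = (-1)^(k+1) := by
      rw [show n+(n-1-k) = 2*n-(k+1) by omega]
      exact np n (k+1) (by omega)
    rw [h1, h2]
  rw [Finset.sum_congr rfl hright, hleft, hmid]
  ring

/-! ### The product side -/

def hh (j : ℕ) : R := (1 - X^j) * (1 + X^j)⁻¹

lemma one_add_mul_inv (j : ℕ) : ((1:R) + X^j) * (1 + X^j)⁻¹ = 1 := by
  apply PowerSeries.mul_inv_cancel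
  cases j <;> simp

lemma D_hh (j : ℕ) : D j (hh j) 1 := by
  apply D.of_mul_unit (one_add_mul_inv j)
  have h1 : hh j * (1 + X^j) = 1 - X^j := by
    rw [hh, mul_assoc, mul_comm ((1+X^j:R))⁻¹, one_add_mul_inv, mul_one]
  rw [h1, one_mul, D]
  have : (1:R) - X^j - (1 + X^j) = (-2) * X^j := by ring
  rw [this]
  exact Dvd.dvd.mul_left dvd_rfl _

lemma prod_tail {m M : ℕ} (hm : m ≤ M) :
    D (m+1) (∏ j ∈ Icc 1 M, hh j) (∏ j ∈ Icc 1 m, hh j) := by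
  induction M, hm using Nat.le_induction with
  | base => exact D.refl _ _
  | succ M hM ih =>
    rw [Finset.prod_Icc_succ_top (by omega : 1 ≤ M+1)]
    have hD : D (m+1) (hh (M+1)) 1 := (D_hh (M+1)).mono (by omega)
    have := ih.mul hD
    rwa [mul_one] at this

lemma key1 (m : ℕ) : ∏ j ∈ Icc 1 (2*m), (1 - (X:R)^j) = OO m * EE m := by
  induction m with
  | zero => simp [OO, EE]
  | succ m ih =>
    have h : 2*(m+1) = (2*m+1)+1 := by omega
    rw [h, Finset.prod_Icc_succ_top (by omega), Finset.prod_Icc_succ_top (by omega),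
      ih, OO_succ, EE_succ]
    ring_nf

lemma key2 (m : ℕ) : ∏ j ∈ Icc 1 m, ((1:R) - X^(2*j)) = EE m := by
  simp only [EE]
  rw [← Finset.Ico_add_one_right_eq_Icc, Finset.prod_Ico_eq_prod_range]
  refine Finset.prod_congr rfl fun i _ => ?_
  have h2 : 2*(1+i) = 2*i+2 := by omega
  rw [h2]

lemma key3 (M : ℕ) : ∏ j ∈ Icc 1 M, (((1:R) - X^j) * (1 + X^j)) = EE M := by
  rw [← key2]
  refine Finset.prod_congr rfl fun j _ => ?_
  rw [two_mul, pow_add]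
  ring

lemma keyProd (n : ℕ) : (∏ j ∈ Icc 1 (2*n), hh j) * EE (2*n) = ((OO n) * EE n)^2 := by
  rw [← key3 (2*n), ← key1 n]
  simp only [hh]
  rw [Finset.prod_mul_distrib, Finset.prod_mul_distrib]
  have hinv : (∏ j ∈ Icc 1 (2*n), ((1:R)+X^j)⁻¹) * (∏ j ∈ Icc 1 (2*n), ((1:R)+X^j)) = 1 := by
    rw [← Finset.prod_mul_distrib,
      Finset.prod_congr rfl (fun j _ => (mul_comm _ _).trans (one_add_mul_inv j))]
    exact Finset.prod_const_one
  calc (∏ j ∈ Icc 1 (2*n), ((1:R) - X^j)) * (∏ j ∈ Icc 1 (2*n), ((1:R)+X^j)⁻¹)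
        * ((∏ j ∈ Icc 1 (2*n), ((1:R) - X^j)) * ∏ j ∈ Icc 1 (2*n), ((1:R)+X^j))
      = (∏ j ∈ Icc 1 (2*n), ((1:R) - X^j))^2
        * ((∏ j ∈ Icc 1 (2*n), ((1:R)+X^j)⁻¹) * (∏ j ∈ Icc 1 (2*n), ((1:R)+X^j))) := by
        ring
    _ = (∏ j ∈ Icc 1 (2*n), ((1:R) - X^j))^2 := by rw [hinv, mul_one]

/-- The core congruence: the truncated product is congruent to 1 + 2·(signed theta sum). -/
lemma core (N : ℕ) : D (N+1) (∏ j ∈ Icc 1 (2*(N+1)), hh j)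
    (1 + 2 * ∑ j ∈ range (N+1), (-1:R)^(j+1) * X^((j+1)^2)) := by
  set n := N + 1 with hn
  have master : D (N+1) (EE N * (OO n)^2)
      (∑ k ∈ range (2*n+1), (-1:R)^(n+k) * X^(dsq n k)) := by
    rw [star n, Finset.mul_sum]
    refine D.sum fun k hk => ?_
    have hk2 : k ≤ 2*n := by simpa [Nat.lt_succ_iff] using hk
    rcases le_or_gt (dsq n k) N with hd | hd
    · have hgg := D_gg hk2 hd
      have h1 : D (N+1) (EE N * ((-1:R)^(n+k) * gg (2*n) k * X^(dsq n k)))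
          (EE N * ((-1:R)^(n+k) * (EE N)⁻¹ * X^(dsq n k))) :=
        (D.refl _ _).mul (((D.refl _ _).mul hgg).mul (D.refl _ _))
      have h2 : EE N * ((-1:R)^(n+k) * (EE N)⁻¹ * X^(dsq n k))
          = (-1:R)^(n+k) * X^(dsq n k) := by
        linear_combination ((-1:R)^(n+k) * X^(dsq n k)) * EE_mul_inv N
      rwa [h2] at h1
    · rw [D]
      have heq : EE N * ((-1:R)^(n+k) * gg (2*n) k * X^(dsq n k)) - (-1:R)^(n+k) * X^(dsq n k)
          = (EE N * ((-1:R)^(n+k) * gg (2*n) k) - (-1:R)^(n+k)) * X^(dsq n k) := by ring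
      rw [heq]
      exact Dvd.dvd.mul_left (pow_dvd_pow X (by omega)) _
  have c2 : D (N+1) (∏ j ∈ Icc 1 (2*n), hh j) ((OO n)^2 * EE N) := by
    apply D.of_mul_unit (EE_mul_inv (2*n))
    rw [keyProd n]
    have eN : D (N+1) (EE n) (EE N) := D_EE (by omega) (by omega)
    have e2n : D (N+1) (EE (2*n)) (EE N) := D_EE (by omega) (by omega)
    have h1 : D (N+1) ((OO n)^2 * (EE n * EE n)) ((OO n)^2 * (EE N * EE (2*n))) :=
      (D.refl _ _).mul (eN.mul (eN.trans e2n.symm))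
    have hL : ((OO n) * EE n)^2 = (OO n)^2 * (EE n * EE n) := by ring
    have hR : (OO n)^2 * (EE N * EE (2*n)) = (OO n)^2 * EE N * EE (2*n) := by ring
    rw [← hL, hR] at h1
    exact h1
  have c1 := master
  rw [Bsimp n, mul_comm (EE N) ((OO n)^2)] at c1
  exact c2.trans c1

lemma neg_one_pow_sq (k : ℕ) : ((-1:R))^(k^2) = (-1:R)^k := by
  rcases Nat.even_or_odd k with he | ho
  · rw [Even.neg_one_pow (by simpa [sq] using he.mul_right k), Even.neg_one_pow he]
  · rw [Odd.neg_one_pow (ho.pow), Odd.neg_one_pow ho]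

lemma coeff_term (m k : ℕ) (h : m < k) : coeff m ((-1:R)^k * X^(k^2)) = 0 := by
  have hC : ((-1:R))^k = C ((-1:ℚ)^k) := by rw [map_pow, map_neg, map_one]
  have hk : k ≤ k^2 := by nlinarith
  rw [hC, PowerSeries.coeff_C_mul, PowerSeries.coeff_X_pow, if_neg (by omega), mul_zero]

lemma hsum_cong (N : ℕ) : D (N+1) (psSum (fun k => (-Q)^(k^2)))
    (∑ j ∈ range (N+1), (-1:R)^(j+1) * X^((j+1)^2)) := by
  rw [D, PowerSeries.X_pow_dvd_iff]
  intro m hm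
  rw [map_sub]
  have hA : (coeff m) (psSum fun k => (-Q)^(k^2))
      = ∑ k ∈ Icc 1 m, coeff m ((-1:R)^k * X^(k^2)) := by
    simp only [psSum, coeff_mk]
    refine Finset.sum_congr rfl fun k _ => ?_
    congr 1
    show (-X : R)^(k^2) = _
    rw [neg_pow, neg_one_pow_sq]
  have hB : (coeff m) (∑ j ∈ range (N+1), (-1:R)^(j+1) * X^((j+1)^2))
      = ∑ k ∈ Icc 1 (N+1), coeff m ((-1:R)^k * X^(k^2)) := by
    rw [map_sum, ← Finset.Ico_add_one_right_eq_Icc, Finset.sum_Ico_eq_sum_range]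
    refine (Finset.sum_congr rfl fun i _ => ?_).symm
    rw [add_comm 1 i]
  rw [hA, hB, sub_eq_zero]
  refine Finset.sum_subset (Finset.Icc_subset_Icc_right (by omega)) fun x hx hnx => ?_
  rw [Finset.mem_Icc] at hx hnx
  exact coeff_term m x (by omega)

lemma hprod_cong (N : ℕ) : D (N+1) (psProd (fun j => (1-Q^j)*(1+Q^j)⁻¹))
    (∏ j ∈ Icc 1 (2*(N+1)), hh j) := by
  rw [D, PowerSeries.X_pow_dvd_iff]
  intro m hm
  rw [map_sub]
  have hA : coeff m (psProd fun j => (1-Q^j)*(1+Q^j)⁻¹)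
      = coeff m (∏ j ∈ Icc 1 m, hh j) := by
    simp only [psProd, coeff_mk]
    rfl
  have hB := prod_tail (show m ≤ 2*(N+1) by omega)
  rw [D, PowerSeries.X_pow_dvd_iff] at hB
  have hB2 := hB m (by omega)
  rw [map_sub, sub_eq_zero] at hB2
  rw [hA, hB2, sub_self]

end GaussAux

open GaussAux

theorem identity_b_limit :
    1 + 2 * psSum (fun k => (-Q) ^ (k ^ 2))
      = psProd (fun j => (1 - Q ^ j) * (1 + Q ^ j)⁻¹) := by
  apply PowerSeries.ext
  intro N
  have d1 : D (N+1) (1 + 2 * psSum (fun k => (-Q)^(k^2)))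
      (1 + 2 * ∑ j ∈ range (N+1), (-1:R)^(j+1) * X^((j+1)^2)) :=
    (D.refl _ _).add ((D.refl _ _).mul (hsum_cong N))
  have d2 := (d1.trans (core N).symm).trans (hprod_cong N).symm
  rw [D, PowerSeries.X_pow_dvd_iff] at d2
  have h := d2 N (by omega)
  rw [map_sub, sub_eq_zero] at h
  exact h
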